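/- Let H be a trace-normalised Hamiltonian on (0,∞) whose diagonal entries do not vanish a.e. near 0. For every pair of closed disjoint subsets A, B of the unit circle 𝕋 there exists a constant c(A,B) > 0, independent of H, such that for all t > 0: (1/t)λ((0,t) ∩ ζ_H^{-1}(A)) · (1/t)λ((0,t) ∩ ζ_H^{-1}(B)) ≤ c(A,B) · d(H,t). -/

import Mathlib

open MeasureTheory Set Real

/-- Rotation angle `φ_H(t) ∈ [0,π)` of a Hamiltonian `[[h₁,h₃],[h₃,h₂]]`;
`arccot x = π/2 − arctan x`. -/
noncomputable def phiH (h₁ h₂ h₃ : ℝ → ℝ) (s : ℝ) : ℝ :=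
  if h₂ s ≠ 0 then
    (if 0 ≤ h₃ s then π / 2 - Real.arctan (Real.sqrt (h₁ s / h₂ s))
      else π - (π / 2 - Real.arctan (Real.sqrt (h₁ s / h₂ s))))
  else 0

/-- Rotation `ζ_H(t) = e^{2iφ_H(t)}`. -/
noncomputable def zetaH (h₁ h₂ h₃ : ℝ → ℝ) (s : ℝ) : ℂ :=
  Complex.exp (((2 * phiH h₁ h₂ h₃ s : ℝ) : ℂ) * Complex.I)

/-- `d(H,t) = det M(t) / (m₁(t) m₂(t))`. -/
noncomputable def dH (h₁ h₂ h₃ : ℝ → ℝ) (t : ℝ) : ℝ :=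
  ((∫ s in Ioo 0 t, h₁ s) * (∫ s in Ioo 0 t, h₂ s) - (∫ s in Ioo 0 t, h₃ s) ^ 2) /
    ((∫ s in Ioo 0 t, h₁ s) * (∫ s in Ioo 0 t, h₂ s))

lemma phi_trig {h₁ h₂ h₃ : ℝ → ℝ} {s : ℝ} (p1 : 0 ≤ h₁ s) (p2 : 0 ≤ h₂ s)
    (p3 : h₃ s ^ 2 ≤ h₁ s * h₂ s) (p4 : h₁ s + h₂ s = 1) :
    Real.sin (phiH h₁ h₂ h₃ s) = Real.sqrt (h₂ s) ∧
    Real.cos (phiH h₁ h₂ h₃ s) = (if 0 ≤ h₃ s then 1 else -1) * Real.sqrt (h₁ s) := by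
  unfold phiH
  by_cases h2 : h₂ s ≠ 0
  · have h2pos : 0 < h₂ s := lt_of_le_of_ne p2 (Ne.symm h2)
    set x := Real.sqrt (h₁ s / h₂ s) with hx
    have hx2 : 1 + x ^ 2 = 1 / h₂ s := by
      rw [hx, Real.sq_sqrt (div_nonneg p1 p2)]
      field_simp
      linarith
    have hsq : Real.sqrt (1 + x ^ 2) = 1 / Real.sqrt (h₂ s) := by
      rw [hx2, one_div, Real.sqrt_inv, one_div]
    have hsin : Real.sin (π / 2 - Real.arctan x) = Real.sqrt (h₂ s) := by
      rw [Real.sin_pi_div_two_sub, Real.cos_arctan, hsq]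
      rw [one_div_one_div]
    have hcos : Real.cos (π / 2 - Real.arctan x) = Real.sqrt (h₁ s) := by
      rw [Real.cos_pi_div_two_sub, Real.sin_arctan, hsq]
      rw [div_div_eq_mul_div, div_one, hx, ← Real.sqrt_mul (div_nonneg p1 p2),
        div_mul_cancel₀ _ (ne_of_gt h2pos)]
    rw [if_pos h2]
    by_cases h3 : 0 ≤ h₃ s
    · simp [h3, hsin, hcos]
    · simp [h3, Real.sin_pi_sub, Real.cos_pi_sub, hsin, hcos]
  · push_neg at h2
    have h1 : h₁ s = 1 := by linarith
    have h3 : h₃ s = 0 := by nlinarith [sq_nonneg (h₃ s)]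
    simp [h2, h1, h3]

lemma dist_exp_sq (x y : ℝ) :
    dist (Complex.exp ((↑(2*x) : ℂ) * Complex.I)) (Complex.exp ((↑(2*y) : ℂ) * Complex.I)) ^ 2
      = 4 * (Real.sin x * Real.cos y - Real.cos x * Real.sin y)^2 := by
  have e : ∀ z : ℝ, Complex.exp ((↑(2*z) : ℂ) * Complex.I)
      = Complex.ofReal (Real.cos (2*z)) + Complex.ofReal (Real.sin (2*z)) * Complex.I := by
    intro z
    rw [Complex.exp_mul_I, Complex.ofReal_cos, Complex.ofReal_sin]
  rw [Complex.dist_eq, Complex.sq_norm, e, e]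
  have hre : ((Complex.ofReal (Real.cos (2*x)) + Complex.ofReal (Real.sin (2*x)) * Complex.I)
      - (Complex.ofReal (Real.cos (2*y)) + Complex.ofReal (Real.sin (2*y)) * Complex.I))
      = Complex.ofReal (Real.cos (2*x) - Real.cos (2*y))
        + Complex.ofReal (Real.sin (2*x) - Real.sin (2*y)) * Complex.I := by
    push_cast; ring
  rw [hre, Complex.normSq_add_mul_I]
  have px := Real.sin_sq_add_cos_sq x
  have py := Real.sin_sq_add_cos_sq y
  rw [Real.cos_two_mul x, Real.cos_two_mul y, Real.sin_two_mul x, Real.sin_two_mul y]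
  linear_combination (4*(Real.cos x^2 - Real.cos y^2)) * px - (4*(Real.cos x^2 - Real.cos y^2)) * py

lemma alpha_exists {h₁ h₂ h₃ : ℝ → ℝ} {s : ℝ} (p1 : 0 ≤ h₁ s) (p2 : 0 ≤ h₂ s)
    (p3 : h₃ s ^ 2 ≤ h₁ s * h₂ s) (p4 : h₁ s + h₂ s = 1) :
    ∃ α, 0 ≤ α ∧ α ≤ 1 ∧
      h₃ s = α * (Real.cos (phiH h₁ h₂ h₃ s) * Real.sin (phiH h₁ h₂ h₃ s)) := by
  obtain ⟨hb, ha⟩ := phi_trig p1 p2 p3 p4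
  by_cases h0 : h₁ s * h₂ s = 0
  · refine ⟨0, le_refl 0, zero_le_one, ?_⟩
    have h30 : h₃ s = 0 := by nlinarith [sq_nonneg (h₃ s)]
    simp [h30]
  · have hprodpos : 0 < h₁ s * h₂ s := lt_of_le_of_ne (mul_nonneg p1 p2) (Ne.symm h0)
    have sqpos : 0 < Real.sqrt (h₁ s * h₂ s) := Real.sqrt_pos.2 hprodpos
    have prod : Real.cos (phiH h₁ h₂ h₃ s) * Real.sin (phiH h₁ h₂ h₃ s)
        = (if 0 ≤ h₃ s then 1 else -1) * Real.sqrt (h₁ s * h₂ s) := by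
      rw [ha, hb, Real.sqrt_mul p1]; ring
    have habs : |h₃ s| ≤ Real.sqrt (h₁ s * h₂ s) := by
      rw [← Real.sqrt_sq_eq_abs]; exact Real.sqrt_le_sqrt p3
    by_cases h3 : 0 ≤ h₃ s
    · refine ⟨h₃ s / Real.sqrt (h₁ s * h₂ s), div_nonneg h3 sqpos.le, ?_, ?_⟩
      · rw [div_le_one sqpos]
        exact le_trans (le_abs_self _) habs
      · rw [prod, if_pos h3, one_mul, div_mul_cancel₀ _ (ne_of_gt sqpos)]
    · refine ⟨-(h₃ s) / Real.sqrt (h₁ s * h₂ s),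
        div_nonneg (by linarith [lt_of_not_ge h3]) sqpos.le, ?_, ?_⟩
      · rw [div_le_one sqpos]
        exact le_trans (neg_le_abs _) habs
      · rw [prod, if_neg h3]
        have : Real.sqrt (h₁ s) * Real.sqrt (h₂ s) ≠ 0 := by
          rw [← Real.sqrt_mul p1]; exact ne_of_gt sqpos
        field_simp

lemma key_ineq {h₁ h₂ h₃ : ℝ → ℝ} {s u : ℝ}
    (ps : 0 ≤ h₁ s ∧ 0 ≤ h₂ s ∧ h₃ s ^ 2 ≤ h₁ s * h₂ s ∧ h₁ s + h₂ s = 1)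
    (pu : 0 ≤ h₁ u ∧ 0 ≤ h₂ u ∧ h₃ u ^ 2 ≤ h₁ u * h₂ u ∧ h₁ u + h₂ u = 1) :
    dist (zetaH h₁ h₂ h₃ s) (zetaH h₁ h₂ h₃ u) ^ 2
      ≤ 16 * ((h₁ s * h₂ u + h₂ s * h₁ u) / 2 - h₃ s * h₃ u) := by
  obtain ⟨p1s, p2s, p3s, p4s⟩ := ps
  obtain ⟨p1u, p2u, p3u, p4u⟩ := pu
  obtain ⟨hbs, has⟩ := phi_trig p1s p2s p3s p4s
  obtain ⟨hbu, hau⟩ := phi_trig p1u p2u p3u p4u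
  obtain ⟨α, hα0, hα1, hαe⟩ := alpha_exists p1s p2s p3s p4s
  obtain ⟨β, hβ0, hβ1, hβe⟩ := alpha_exists p1u p2u p3u p4u
  set as := Real.cos (phiH h₁ h₂ h₃ s) with has'
  set bs := Real.sin (phiH h₁ h₂ h₃ s) with hbs'
  set au := Real.cos (phiH h₁ h₂ h₃ u) with hau'
  set bu := Real.sin (phiH h₁ h₂ h₃ u) with hbu'
  have e1 : h₁ s = as ^ 2 := by
    rw [has]; rw [mul_pow]
    rcases le_or_gt 0 (h₃ s) with h | h
    · rw [if_pos h]; rw [Real.sq_sqrt p1s]; ring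
    · rw [if_neg (not_le.2 h)]; rw [Real.sq_sqrt p1s]; ring
  have e2 : h₂ s = bs ^ 2 := by rw [hbs, Real.sq_sqrt p2s]
  have e3 : h₁ u = au ^ 2 := by
    rw [hau]; rw [mul_pow]
    rcases le_or_gt 0 (h₃ u) with h | h
    · rw [if_pos h]; rw [Real.sq_sqrt p1u]; ring
    · rw [if_neg (not_le.2 h)]; rw [Real.sq_sqrt p1u]; ring
  have e4 : h₂ u = bu ^ 2 := by rw [hbu, Real.sq_sqrt p2u]
  have hd : dist (zetaH h₁ h₂ h₃ s) (zetaH h₁ h₂ h₃ u) ^ 2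
      = 4 * (bs * au - as * bu) ^ 2 := by
    show dist (Complex.exp (((2 * phiH h₁ h₂ h₃ s : ℝ) : ℂ) * Complex.I))
        (Complex.exp (((2 * phiH h₁ h₂ h₃ u : ℝ) : ℂ) * Complex.I)) ^ 2 = _
    rw [dist_exp_sq]
  rw [hd, e1, e2, e3, e4, hαe, hβe]
  have hp0 : 0 ≤ α * β := mul_nonneg hα0 hβ0
  have hp1 : α * β ≤ 1 := mul_le_one₀ hα1 hβ0 hβ1
  nlinarith [mul_nonneg hp0 (sq_nonneg (as * bu - bs * au)),
    mul_nonneg (sub_nonneg.2 hp1) (sq_nonneg (as * bu + bs * au))]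

lemma zetaH_measurable {h₁ h₂ h₃ : ℝ → ℝ} (mh₁ : Measurable h₁) (mh₂ : Measurable h₂)
    (mh₃ : Measurable h₃) : Measurable (zetaH h₁ h₂ h₃) := by
  have marc : Measurable fun s => π / 2 - Real.arctan (Real.sqrt (h₁ s / h₂ s)) :=
    measurable_const.sub (Real.continuous_arctan.measurable.comp ((mh₁.div mh₂).sqrt))
  have mphi : Measurable (phiH h₁ h₂ h₃) := by
    unfold phiH
    refine Measurable.ite ?_ ?_ measurable_const
    · exact (mh₂ (measurableSet_singleton 0)).compl
    · exact Measurable.ite (mh₃ measurableSet_Ici) marc (measurable_const.sub marc)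
  unfold zetaH
  exact Complex.measurable_exp.comp
    ((Complex.measurable_ofReal.comp (mphi.const_mul 2)).mul_const Complex.I)

lemma sep_const {A B : Set ℂ} (hA : IsClosed A) (hB : IsClosed B)
    (hAT : A ⊆ Metric.sphere (0:ℂ) 1) (hdisj : Disjoint A B) :
    ∃ δ > (0:ℝ), ∀ a ∈ A, ∀ b ∈ B, δ ≤ dist a b := by
  have hAc : IsCompact A :=
    Metric.isCompact_of_isClosed_isBounded hA ((Metric.isBounded_sphere).subset hAT)
  obtain ⟨δ, hδ, hdis⟩ := hdisj.exists_thickenings hAc hB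
  refine ⟨δ, hδ, fun a ha b hb => ?_⟩
  by_contra hlt
  push_neg at hlt
  have h1 : b ∈ Metric.thickening δ A := Metric.mem_thickening_iff.2 ⟨a, ha, by
    rw [dist_comm]; exact hlt⟩
  have h2 : b ∈ Metric.thickening δ B := (Metric.self_subset_thickening hδ B) hb
  exact (Set.disjoint_left.1 hdis) h1 h2

set_option maxHeartbeats 1600000 in
theorem stmt11 (A B : Set ℂ) (hA : IsClosed A) (hB : IsClosed B)
    (hAT : A ⊆ Metric.sphere (0:ℂ) 1) (hBT : B ⊆ Metric.sphere (0:ℂ) 1)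
    (hdisj : Disjoint A B) :
    ∃ c > (0:ℝ), ∀ h₁ h₂ h₃ : ℝ → ℝ,
      (Measurable h₁ ∧ Measurable h₂ ∧ Measurable h₃) →
      (∀ᵐ s ∂(volume.restrict (Ioi (0:ℝ))),
        0 ≤ h₁ s ∧ 0 ≤ h₂ s ∧ h₃ s ^ 2 ≤ h₁ s * h₂ s ∧ h₁ s + h₂ s = 1) →
      (∀ ε > (0:ℝ), volume {s ∈ Ioo 0 ε | h₁ s ≠ 0} ≠ 0 ∧
        volume {s ∈ Ioo 0 ε | h₂ s ≠ 0} ≠ 0) →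
      (∀ t > (0:ℝ), (0 < ∫ s in Ioo 0 t, h₁ s) ∧ (0 < ∫ s in Ioo 0 t, h₂ s)) →
      ∀ t > (0:ℝ),
        (1 / t * (volume (Ioo 0 t ∩ zetaH h₁ h₂ h₃ ⁻¹' A)).toReal) *
          (1 / t * (volume (Ioo 0 t ∩ zetaH h₁ h₂ h₃ ⁻¹' B)).toReal) ≤
        c * dH h₁ h₂ h₃ t := by
  obtain ⟨δ, hδ, hsep⟩ := sep_const hA hB hAT hdisj
  refine ⟨4 / δ ^ 2, by positivity, ?_⟩
  rintro h₁ h₂ h₃ ⟨mh₁, mh₂, mh₃⟩ hae _ hpos t ht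
  obtain ⟨hm₁, hm₂⟩ := hpos t ht
  have mζ : Measurable (zetaH h₁ h₂ h₃) := zetaH_measurable mh₁ mh₂ mh₃
  set I : Set ℝ := Ioo 0 t with hI
  have measI : MeasurableSet I := measurableSet_Ioo
  have hIsub : I ⊆ Ioi (0:ℝ) := Ioo_subset_Ioi_self
  set m₁ := ∫ s in I, h₁ s with hm1d
  set m₂ := ∫ s in I, h₂ s with hm2d
  set m₃ := ∫ s in I, h₃ s with hm3d
  have haeI : ∀ᵐ s ∂(volume.restrict I),
      0 ≤ h₁ s ∧ 0 ≤ h₂ s ∧ h₃ s ^ 2 ≤ h₁ s * h₂ s ∧ h₁ s + h₂ s = 1 :=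
    ae_restrict_of_ae_restrict_of_subset hIsub hae
  have hvolI : volume I = ENNReal.ofReal t := by rw [hI, Real.volume_Ioo, sub_zero]
  have hIfin : volume I < ⊤ := by rw [hvolI]; exact ENNReal.ofReal_lt_top
  have hint : ∀ {f : ℝ → ℝ}, Measurable f →
      (∀ᵐ s ∂(volume.restrict I), ‖f s‖ ≤ 1) → IntegrableOn f I := by
    intro f mf hbd
    exact Integrable.mono' (integrableOn_const hIfin.ne) mf.aestronglyMeasurable hbd
  have int₁ : IntegrableOn h₁ I := hint mh₁ (haeI.mono fun s hs => by
    rw [Real.norm_eq_abs, abs_le]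
    exact ⟨by linarith [hs.1], by linarith [hs.1, hs.2.1, hs.2.2.2]⟩)
  have int₂ : IntegrableOn h₂ I := hint mh₂ (haeI.mono fun s hs => by
    rw [Real.norm_eq_abs, abs_le]
    exact ⟨by linarith [hs.2.1], by linarith [hs.1, hs.2.1, hs.2.2.2]⟩)
  have int₃ : IntegrableOn h₃ I := hint mh₃ (haeI.mono fun s hs => by
    obtain ⟨q1, q2, q3, q4⟩ := hs
    rw [Real.norm_eq_abs, abs_le]
    constructor <;> nlinarith)
  -- sets
  set EA := I ∩ zetaH h₁ h₂ h₃ ⁻¹' A with hEA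
  set EB := I ∩ zetaH h₁ h₂ h₃ ⁻¹' B with hEB
  have measEA : MeasurableSet EA := measI.inter (mζ hA.measurableSet)
  have measEB : MeasurableSet EB := measI.inter (mζ hB.measurableSet)
  have hEAfin : volume EA < ⊤ := lt_of_le_of_lt (measure_mono inter_subset_left) hIfin
  have hEBfin : volume EB < ⊤ := lt_of_le_of_lt (measure_mono inter_subset_left) hIfin
  set a := (volume EA).toReal with had
  set b := (volume EB).toReal with hbd
  have ha0 : 0 ≤ a := ENNReal.toReal_nonneg
  have hb0 : 0 ≤ b := ENNReal.toReal_nonneg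
  -- G and g
  set G : ℝ → ℝ → ℝ := fun s u => (h₁ s * h₂ u + h₂ s * h₁ u) / 2 - h₃ s * h₃ u with hGd
  set g : ℝ → ℝ := fun s => (h₁ s * m₂ + h₂ s * m₁) / 2 - h₃ s * m₃ with hgd
  have intGs : ∀ s, IntegrableOn (G s) I := by
    intro s
    have e : G s = fun u => (h₁ s / 2) * h₂ u + ((h₂ s / 2) * h₁ u + (-(h₃ s)) * h₃ u) := by
      funext u; simp only [hGd]; ring
    rw [e]
    exact (int₂.const_mul _).add ((int₁.const_mul _).add (int₃.const_mul _))
  have hadd : ∀ (f f' : ℝ → ℝ), IntegrableOn f I → IntegrableOn f' I →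
      ∫ u in I, (f u + f' u) = (∫ u in I, f u) + ∫ u in I, f' u := fun f f' hf hf' =>
    integral_add hf hf'
  have hgval : ∀ s, ∫ u in I, G s u = g s := by
    intro s
    have e : ∀ u, G s u = (h₁ s / 2) * h₂ u + ((h₂ s / 2) * h₁ u + (-(h₃ s)) * h₃ u) := by
      intro u; simp only [hGd]; ring
    simp_rw [e]
    rw [hadd (fun u => (h₁ s / 2) * h₂ u) (fun u => (h₂ s / 2) * h₁ u + (-(h₃ s)) * h₃ u)
        (int₂.const_mul _) ((int₁.const_mul _).add (int₃.const_mul _)),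
      hadd (fun u => (h₂ s / 2) * h₁ u) (fun u => (-(h₃ s)) * h₃ u)
        (int₁.const_mul _) (int₃.const_mul _),
      integral_const_mul, integral_const_mul, integral_const_mul]
    simp only [hgd, ← hm1d, ← hm2d, ← hm3d]
    ring
  have intg : IntegrableOn g I := by
    have e : g = fun s => (m₂ / 2) * h₁ s + ((m₁ / 2) * h₂ s + (-m₃) * h₃ s) := by
      funext s; simp only [hgd]; ring
    rw [e]
    exact (int₁.const_mul _).add ((int₂.const_mul _).add (int₃.const_mul _))
  have hintg : ∫ s in I, g s = m₁ * m₂ - m₃ ^ 2 := by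
    have e : ∀ s, g s = (m₂ / 2) * h₁ s + ((m₁ / 2) * h₂ s + (-m₃) * h₃ s) := by
      intro s; simp only [hgd]; ring
    simp_rw [e]
    rw [hadd (fun u => (m₂ / 2) * h₁ u) (fun u => (m₁ / 2) * h₂ u + (-m₃) * h₃ u)
        (int₁.const_mul _) ((int₂.const_mul _).add (int₃.const_mul _)),
      hadd (fun u => (m₁ / 2) * h₂ u) (fun u => (-m₃) * h₃ u)
        (int₂.const_mul _) (int₃.const_mul _),
      integral_const_mul, integral_const_mul, integral_const_mul]
    simp only [← hm1d, ← hm2d, ← hm3d]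
    ring
  -- pointwise facts
  have hG0 : ∀ {s u : ℝ},
      (0 ≤ h₁ s ∧ 0 ≤ h₂ s ∧ h₃ s ^ 2 ≤ h₁ s * h₂ s ∧ h₁ s + h₂ s = 1) →
      (0 ≤ h₁ u ∧ 0 ≤ h₂ u ∧ h₃ u ^ 2 ≤ h₁ u * h₂ u ∧ h₁ u + h₂ u = 1) →
      0 ≤ G s u := by
    intro s u ps pu
    have h1 := key_ineq ps pu
    have h2 := sq_nonneg (dist (zetaH h₁ h₂ h₃ s) (zetaH h₁ h₂ h₃ u))
    simp only [hGd]
    nlinarith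
  have hGδ : ∀ {s u : ℝ},
      (0 ≤ h₁ s ∧ 0 ≤ h₂ s ∧ h₃ s ^ 2 ≤ h₁ s * h₂ s ∧ h₁ s + h₂ s = 1) →
      (0 ≤ h₁ u ∧ 0 ≤ h₂ u ∧ h₃ u ^ 2 ≤ h₁ u * h₂ u ∧ h₁ u + h₂ u = 1) →
      zetaH h₁ h₂ h₃ s ∈ A → zetaH h₁ h₂ h₃ u ∈ B → δ ^ 2 / 16 ≤ G s u := by
    intro s u ps pu hsA huB
    have h1 := key_ineq ps pu
    have h2 : δ ≤ dist (zetaH h₁ h₂ h₃ s) (zetaH h₁ h₂ h₃ u) := hsep _ hsA _ huB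
    have h3 : δ ^ 2 ≤ dist (zetaH h₁ h₂ h₃ s) (zetaH h₁ h₂ h₃ u) ^ 2 := by
      apply sq_le_sq' <;> nlinarith [dist_nonneg (x := zetaH h₁ h₂ h₃ s) (y := zetaH h₁ h₂ h₃ u)]
    simp only [hGd]
    nlinarith
  -- a.e. goodness on subsets
  have haeEA : ∀ᵐ s ∂(volume.restrict EA),
      0 ≤ h₁ s ∧ 0 ≤ h₂ s ∧ h₃ s ^ 2 ≤ h₁ s * h₂ s ∧ h₁ s + h₂ s = 1 :=
    ae_restrict_of_ae_restrict_of_subset (inter_subset_left.trans hIsub) hae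
  have haeEB : ∀ᵐ s ∂(volume.restrict EB),
      0 ≤ h₁ s ∧ 0 ≤ h₂ s ∧ h₃ s ^ 2 ≤ h₁ s * h₂ s ∧ h₁ s + h₂ s = 1 :=
    ae_restrict_of_ae_restrict_of_subset (inter_subset_left.trans hIsub) hae
  -- a.e. lower bound for g on EA
  have hstep : ∀ᵐ s ∂(volume.restrict EA), δ ^ 2 / 16 * b ≤ g s := by
    filter_upwards [haeEA, ae_restrict_mem measEA] with s ps hsEA
    have hζsA : zetaH h₁ h₂ h₃ s ∈ A := hsEA.2
    have hle1 : ∫ u in EB, G s u ≤ ∫ u in I, G s u := by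
      apply setIntegral_mono_set (intGs s) ?_ (HasSubset.Subset.eventuallyLE inter_subset_left)
      exact haeI.mono fun u pu => hG0 ps pu
    have hle2 : δ ^ 2 / 16 * b ≤ ∫ u in EB, G s u := by
      have hmono : ∫ u in EB, (δ ^ 2 / 16 : ℝ) ≤ ∫ u in EB, G s u := by
        apply integral_mono_ae (integrableOn_const (C := (δ ^ 2 / 16 : ℝ)) hEBfin.ne)
          ((intGs s).mono_set inter_subset_left)
        filter_upwards [haeEB, ae_restrict_mem measEB] with u pu huEB
        exact hGδ ps pu hζsA huEB.2
      rwa [setIntegral_const, smul_eq_mul, mul_comm] at hmono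
    calc δ ^ 2 / 16 * b ≤ ∫ u in EB, G s u := hle2
      _ ≤ ∫ u in I, G s u := hle1
      _ = g s := hgval s
  -- g nonneg a.e. on I
  have hgnn : ∀ᵐ s ∂(volume.restrict I), 0 ≤ g s := by
    filter_upwards [haeI] with s ps
    rw [← hgval s]
    exact integral_nonneg_of_ae (haeI.mono fun u pu => hG0 ps pu)
  -- main estimate
  have hdet : δ ^ 2 / 16 * b * a ≤ m₁ * m₂ - m₃ ^ 2 := by
    calc δ ^ 2 / 16 * b * a = (volume EA).toReal • (δ ^ 2 / 16 * b) := by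
          rw [smul_eq_mul, ← had]; ring
      _ = ∫ _ in EA, (δ ^ 2 / 16 * b) := (setIntegral_const _).symm
      _ ≤ ∫ s in EA, g s := integral_mono_ae (integrableOn_const hEAfin.ne)
          (intg.mono_set inter_subset_left) hstep
      _ ≤ ∫ s in I, g s :=
          setIntegral_mono_set intg hgnn (HasSubset.Subset.eventuallyLE inter_subset_left)
      _ = m₁ * m₂ - m₃ ^ 2 := hintg
  have hdetnn : 0 ≤ m₁ * m₂ - m₃ ^ 2 := le_trans (by positivity) hdet
  have htr : m₁ + m₂ = t := by
    have e1 : ∫ s in I, (h₁ s + h₂ s) = ∫ _ in I, (1:ℝ) :=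
      integral_congr_ae (haeI.mono fun s hs => hs.2.2.2)
    rw [integral_add int₁ int₂, setIntegral_const, smul_eq_mul, mul_one, measureReal_def, hvolI,
      ENNReal.toReal_ofReal ht.le] at e1
    exact e1
  have hm12 : m₁ * m₂ ≤ t ^ 2 / 4 := by nlinarith [sq_nonneg (m₁ - m₂)]
  -- final arithmetic
  have hdHeq : dH h₁ h₂ h₃ t = (m₁ * m₂ - m₃ ^ 2) / (m₁ * m₂) := by
    rw [dH, ← hI, ← hm1d, ← hm2d, ← hm3d]
  rw [hdHeq]
  clear_value a b m₁ m₂ m₃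
  have hmp : 0 < m₁ * m₂ := mul_pos hm₁ hm₂
  have h4 : (m₁ * m₂ - m₃ ^ 2) / (t ^ 2 / 4) ≤ (m₁ * m₂ - m₃ ^ 2) / (m₁ * m₂) :=
    div_le_div_of_nonneg_left hdetnn hmp hm12
  have hab : a * b ≤ 16 / δ ^ 2 * (m₁ * m₂ - m₃ ^ 2) := by
    have h5 := mul_le_mul_of_nonneg_left hdet (show (0:ℝ) ≤ 16 / δ ^ 2 by positivity)
    have h6 : 16 / δ ^ 2 * (δ ^ 2 / 16 * b * a) = a * b := by
      field_simp
    rw [h6] at h5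
    linarith
  calc (1 / t * a) * (1 / t * b) = (a * b) / t ^ 2 := by
        ring
    _ ≤ (16 / δ ^ 2 * (m₁ * m₂ - m₃ ^ 2)) / t ^ 2 := by
        gcongr
    _ = 4 / δ ^ 2 * ((m₁ * m₂ - m₃ ^ 2) / (t ^ 2 / 4)) := by
        field_simp; ring
    _ ≤ 4 / δ ^ 2 * ((m₁ * m₂ - m₃ ^ 2) / (m₁ * m₂)) :=
        mul_le_mul_of_nonneg_left h4 (by positivity)
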